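/- Let A⁺, A⁻ : ℝ → ℝ and u⁺, u⁻, û, c ∈ ℝ. Assume the Rankine–Hugoniot condition A⁺(u⁺) = A⁻(u⁻), that û does NOT lie strictly between u⁻ and u⁺, that c does not lie strictly between u⁻ and u⁺, that c ∉ {u⁺, u⁻, û}, and that the Kruzkov entropy inequality holds at c. Then [sign(u⁺−c) − sign(u⁻−c)]·A⁺(u⁺) ≤ 2·sign(u⁺−û)·[A⁺(c)·𝟙_{(û,u⁺)}(c) − A⁻(c)·𝟙_{(û,u⁻)}(c)]. -/
import Mathlib


open MeasureTheory Filter Set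

/-- The Kruzkov entropy inequality at `c` for data `(um, up, uh)`:
`A⁺(u⁺)·sign(u⁺−c) − 2·sign(u⁺−û)·A⁺(c)·𝟙_{(û,u⁺)}(c) ≤
 A⁻(u⁻)·sign(u⁻−c) − 2·sign(u⁻−û)·A⁻(c)·𝟙_{(û,u⁻)}(c)`. -/
def KruzkovIneq (Ap Am : ℝ → ℝ) (um up uh c : ℝ) : Prop :=
  Ap up * Real.sign (up - c) -
      2 * Real.sign (up - uh) * Ap c * Set.indicator (Set.uIoo uh up) (1 : ℝ → ℝ) c
    ≤ Am um * Real.sign (um - c) -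
      2 * Real.sign (um - uh) * Am c * Set.indicator (Set.uIoo uh um) (1 : ℝ → ℝ) c

theorem stmt_8 (Ap Am : ℝ → ℝ) (up um uh c : ℝ)
    (hRH : Ap up = Am um)
    (huh : uh ∉ Set.uIoo um up)
    (hc : c ∉ Set.uIoo um up)
    (hcup : c ≠ up) (hcum : c ≠ um) (hcuh : c ≠ uh)
    (hkruz : KruzkovIneq Ap Am um up uh c) :
    (Real.sign (up - c) - Real.sign (um - c)) * Ap up ≤
      2 * Real.sign (up - uh) *
        (Ap c * Set.indicator (Set.uIoo uh up) (1 : ℝ → ℝ) c -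
         Am c * Set.indicator (Set.uIoo uh um) (1 : ℝ → ℝ) c) := by
  unfold KruzkovIneq at hkruz
  by_cases hm : c ∈ Set.uIoo uh um
  · -- indicator for um is 1; show sign(um - uh) = sign(up - uh)
    have hne : up ≠ uh := by
      rintro rfl
      exact hc (by rwa [Set.uIoo_comm] at hm)
    have hmem := hm
    rw [Set.uIoo, Set.mem_Ioo] at hmem
    have hsign : Real.sign (um - uh) = Real.sign (up - uh) := by
      rcases lt_trichotomy uh um with h1 | h1 | h1
      · have h2 : uh < up := by
          rcases lt_trichotomy uh up with h | h | h
          · exact h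
          · exact absurd h.symm hne
          · exact absurd (Set.mem_uIoo_of_gt h h1) huh
        rw [Real.sign_of_pos (by linarith), Real.sign_of_pos (by linarith)]
      · simp [h1.symm, Set.uIoo_self] at hm
      · have h2 : up < uh := by
          rcases lt_trichotomy up uh with h | h | h
          · exact h
          · exact absurd h hne
          · exact absurd (Set.mem_uIoo_of_lt h1 h) huh
        rw [Real.sign_of_neg (by linarith), Real.sign_of_neg (by linarith)]
    rw [hsign] at hkruz
    rw [hRH] at *
    linarith
  · rw [Set.indicator_of_notMem hm] at hkruz ⊢
    rw [hRH] at *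
    linarith
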